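/- Let S ⊆ V be a seed set and let θ* be any distribution attaining the minimum of E_θ[R(c̃, S)] over θ ∈ Θ. Then for every node i ∈ V \ S, the probability under θ* that i is influenced equals π*_i exactly: θ*({c : i is reachable from S along edges of c}) = π*_i. -/

import Mathlib

open scoped BigOperators

namespace CorrIM

variable {V : Type*} [Fintype V] [DecidableEq V]

/-- A node `i` is influenced: `i ∈ S`, or `i` is reachable from some node of `S`
along the live edges of the scenario `c`. -/
def influenced (c : Finset (V × V)) (S : Finset V) (i : V) : Prop :=
  ∃ s ∈ S, Relation.ReflTransGen (fun a b : V => (a, b) ∈ c) s i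

/-- `R c S` : the number of influenced nodes in scenario `c` with seed set `S`. -/
noncomputable def R (c : Finset (V × V)) (S : Finset V) : ℕ :=
  Set.ncard {i : V | influenced c S i}

/-- The Fréchet class `Θ` : probability distributions on scenarios (subsets of `E`)
whose marginals agree with the edge likelihoods `p`. -/
def memTheta (E : Finset (V × V)) (p : V × V → ℝ) (θ : Finset (V × V) → ℝ) : Prop :=
  (∀ c, 0 ≤ θ c) ∧ (∀ c, θ c ≠ 0 → c ⊆ E) ∧ (∑ c : Finset (V × V), θ c) = 1 ∧
    ∀ e ∈ E, (∑ c : Finset (V × V), if e ∈ c then θ c else 0) = p e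

/-- Expected number of influenced nodes under the distribution `θ`. -/
noncomputable def expInf (θ : Finset (V × V) → ℝ) (S : Finset V) : ℝ :=
  ∑ c : Finset (V × V), θ c * (R c S : ℝ)

/-- The correlation robust influence function `f^corr`. -/
noncomputable def fcorr (E : Finset (V × V)) (p : V × V → ℝ) (S : Finset V) : ℝ :=
  sInf {x : ℝ | ∃ θ, memTheta E p θ ∧ x = expInf θ S}

open Classical in
/-- Probability of the event `A` under the distribution `θ`. -/
noncomputable def prob (θ : Finset (V × V) → ℝ) (A : Finset (V × V) → Prop) : ℝ :=
  ∑ c : Finset (V × V), if A c then θ c else 0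

/-- `γ` (a list of nodes `i₀, i₁, …, i_λ`, `λ ≥ 1`) is a directed path from the
seed set `S` to the node `i` using edges of `E`. -/
def IsPathFrom (E : Finset (V × V)) (S : Finset V) (i : V) (γ : List V) : Prop :=
  2 ≤ γ.length ∧ (∃ s ∈ S, γ.head? = some s) ∧ γ.getLast? = some i ∧
    γ.Chain' (fun a b : V => (a, b) ∈ E)

/-- The list of edges `(i₀,i₁), …, (i_{λ-1}, i_λ)` of a path `γ = [i₀, …, i_λ]`. -/
def pathEdges (γ : List V) : List (V × V) := γ.zip γ.tail

/-- The weight `L(γ) = 1 - ∑_{l=1}^{λ} (1 - p(i_{l-1}, i_l))` of a path. -/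
noncomputable def L (p : V × V → ℝ) (γ : List V) : ℝ :=
  1 - ((pathEdges γ).map (fun e => 1 - p e)).sum

/-- `π*_i = max(0, max_{γ ∈ Γ(S,i)} L(γ))`, with value `0` when `Γ(S,i) = ∅`. -/
noncomputable def piStar (E : Finset (V × V)) (p : V × V → ℝ) (S : Finset V) (i : V) : ℝ :=
  sSup (insert 0 {x : ℝ | ∃ γ : List V, IsPathFrom E S i γ ∧ x = L p γ})

/-- The independent cascade distribution `θ_ic` : each edge of `E` is live
independently with probability `p e`. -/
noncomputable def thetaIC (E : Finset (V × V)) (p : V × V → ℝ) (c : Finset (V × V)) : ℝ :=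
  if c ⊆ E then (∏ e ∈ c, p e) * ∏ e ∈ E \ c, (1 - p e) else 0

/-- The independent cascade influence function `f^ic`. -/
noncomputable def fic (E : Finset (V × V)) (p : V × V → ℝ) (S : Finset V) : ℝ :=
  expInf (thetaIC E p) S


set_option linter.unusedSectionVars false
set_option maxHeartbeats 1000000

section Aux

open Classical

variable (E : Finset (V × V)) (p : V × V → ℝ) (S : Finset V)

/-! ## basic list lemmas -/

lemma pathEdges_cons_cons (x y : V) (t : List V) :
    pathEdges (x :: y :: t) = (x, y) :: pathEdges (y :: t) := rfl

lemma pathEdges_mem_of_chain' {γ : List V} (h : γ.Chain' (fun a b : V => (a, b) ∈ E))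
    {e : V × V} (he : e ∈ pathEdges γ) : e ∈ E := by
  induction γ with
  | nil => simp [pathEdges] at he
  | cons x t ih =>
    cases t with
    | nil => simp [pathEdges] at he
    | cons y s =>
      rw [pathEdges_cons_cons] at he
      rcases List.mem_cons.1 he with h1 | h2
      · subst h1; exact (List.isChain_cons_cons.1 h).1
      · exact ih (List.isChain_cons_cons.1 h).2 h2

lemma pathEdges_concat {γ : List V} (h : γ ≠ []) (b : V) :
    pathEdges (γ ++ [b]) = pathEdges γ ++ [(γ.getLast h, b)] := by
  induction γ with
  | nil => simp at h
  | cons x t ih =>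
    cases t with
    | nil => simp [pathEdges]
    | cons y s =>
      simp only [List.cons_append] at ih ⊢
      rw [pathEdges_cons_cons, ih (by simp), pathEdges_cons_cons]
      simp [List.getLast_cons]

lemma chain'_of_pathEdges {c : Finset (V × V)} {γ : List V}
    (h : ∀ e ∈ pathEdges γ, e ∈ c) : γ.Chain' (fun a b : V => (a, b) ∈ c) := by
  induction γ with
  | nil => simp [List.Chain']
  | cons x t ih =>
    cases t with
    | nil => simp [List.Chain']
    | cons y s =>
      rw [List.Chain', List.isChain_cons_cons]
      rw [pathEdges_cons_cons] at h
      exact ⟨h _ (by simp), ih fun e he => h e (List.mem_cons_of_mem _ he)⟩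

lemma reflTransGen_of_chain' {R : V → V → Prop} {γ : List V} {s i : V}
    (h : γ.Chain' R) (hh : γ.head? = some s) (hl : γ.getLast? = some i) :
    Relation.ReflTransGen R s i := by
  induction γ generalizing s with
  | nil => simp at hh
  | cons x t ih =>
    cases t with
    | nil =>
      simp at hh hl; subst hh; subst hl; exact Relation.ReflTransGen.refl
    | cons y u =>
      simp at hh; subst hh
      have h1 := List.isChain_cons_cons.1 h
      exact Relation.ReflTransGen.head h1.1 (ih h1.2 rfl (by simpa using hl))


/-! ## piStar basics -/

def pathVals (i : V) : Set ℝ := insert 0 {x : ℝ | ∃ γ : List V, IsPathFrom E S i γ ∧ x = L p γ}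

lemma piStar_eq (i : V) : piStar E p S i = sSup (pathVals E p S i) := rfl

lemma L_le_one (hp : ∀ e ∈ E, 0 ≤ p e ∧ p e ≤ 1) {i : V} {γ : List V}
    (hγ : IsPathFrom E S i γ) : L p γ ≤ 1 := by
  have h : 0 ≤ ((pathEdges γ).map (fun e => 1 - p e)).sum := by
    apply List.sum_nonneg
    intro x hx
    rcases List.mem_map.1 hx with ⟨e, he, rfl⟩
    have := (hp e (pathEdges_mem_of_chain' E hγ.2.2.2 he)).2
    linarith
  simp only [L]; linarith

lemma pathVals_bddAbove (hp : ∀ e ∈ E, 0 ≤ p e ∧ p e ≤ 1) (i : V) :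
    BddAbove (pathVals E p S i) := by
  refine ⟨1, fun x hx => ?_⟩
  rcases hx with rfl | ⟨γ, hγ, rfl⟩
  · norm_num
  · exact L_le_one E p S hp hγ

lemma piStar_nonneg (hp : ∀ e ∈ E, 0 ≤ p e ∧ p e ≤ 1) (i : V) :
    0 ≤ piStar E p S i :=
  le_csSup (pathVals_bddAbove E p S hp i) (Set.mem_insert 0 _)

lemma piStar_le_one (hp : ∀ e ∈ E, 0 ≤ p e ∧ p e ≤ 1) (i : V) :
    piStar E p S i ≤ 1 := by
  apply Real.sSup_le _ zero_le_one
  intro x hx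
  rcases hx with rfl | ⟨γ, hγ, rfl⟩
  · norm_num
  · exact L_le_one E p S hp hγ

lemma le_piStar_of_path (hp : ∀ e ∈ E, 0 ≤ p e ∧ p e ≤ 1) {i : V} {γ : List V}
    (hγ : IsPathFrom E S i γ) : L p γ ≤ piStar E p S i :=
  le_csSup (pathVals_bddAbove E p S hp i) (Set.mem_insert_of_mem _ ⟨γ, hγ, rfl⟩)

lemma isPathFrom_concat {a b : V} {γ : List V} (hγ : IsPathFrom E S a γ)
    (hab : (a, b) ∈ E) :
    IsPathFrom E S b (γ ++ [b]) ∧ L p (γ ++ [b]) = L p γ - (1 - p (a, b)) := by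
  obtain ⟨hlen, ⟨s, hs, hhead⟩, hlast, hchain⟩ := hγ
  have hne : γ ≠ [] := by rintro rfl; simp at hlen
  have hlastab : γ.getLast hne = a := by
    rw [List.getLast?_eq_getLast hne] at hlast
    exact Option.some_injective _ hlast
  have hpe : pathEdges (γ ++ [b]) = pathEdges γ ++ [(a, b)] := by
    rw [pathEdges_concat hne b, hlastab]
  constructor
  · refine ⟨by simp; omega, ⟨s, hs, ?_⟩, by simp, ?_⟩
    · rwa [List.head?_append_of_ne_nil _ hne]
    · apply chain'_of_pathEdges
      intro e he
      rw [hpe] at he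
      rcases List.mem_append.1 he with h1 | h2
      · exact pathEdges_mem_of_chain' E hchain h1
      · simp at h2; subst h2; exact hab
  · simp [L, hpe]; ring

/-! ## the distance function -/

noncomputable def dd (i : V) : ℝ := if i ∈ S then 0 else 1 - piStar E p S i

lemma dd_nonneg (hp : ∀ e ∈ E, 0 ≤ p e ∧ p e ≤ 1) (i : V) : 0 ≤ dd E p S i := by
  unfold dd
  split
  · norm_num
  · have := piStar_le_one E p S hp i; linarith

lemma dd_le_one (hp : ∀ e ∈ E, 0 ≤ p e ∧ p e ≤ 1) (i : V) : dd E p S i ≤ 1 := by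
  unfold dd
  split
  · norm_num
  · have := piStar_nonneg E p S hp i; linarith

lemma dd_triangle (hp : ∀ e ∈ E, 0 ≤ p e ∧ p e ≤ 1) {a b : V} (hab : (a, b) ∈ E) :
    dd E p S b ≤ dd E p S a + (1 - p (a, b)) := by
  have hw0 : 0 ≤ 1 - p (a, b) := by have := (hp _ hab).2; linarith
  by_cases hb : b ∈ S
  · have h0 : dd E p S b = 0 := by simp [dd, hb]
    have := dd_nonneg E p S hp a
    rw [h0]; linarith
  by_cases ha : a ∈ S
  · have hpath : IsPathFrom E S b [a, b] := by
      refine ⟨by simp, ⟨a, ha, rfl⟩, by simp, by simp [List.Chain', hab]⟩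
    have hL : L p [a, b] = p (a, b) := by simp [L, pathEdges]
    have := le_piStar_of_path E p S hp hpath
    rw [hL] at this
    have h1 : dd E p S a = 0 := by simp [dd, ha]
    have h2 : dd E p S b = 1 - piStar E p S b := by simp [dd, hb]
    rw [h1, h2]; linarith
  · have key : piStar E p S a ≤ piStar E p S b + (1 - p (a, b)) := by
      apply Real.sSup_le
      · intro x hx
        rcases hx with rfl | ⟨γ, hγ, rfl⟩
        · have := piStar_nonneg E p S hp b; linarith
        · obtain ⟨hpath, hLeq⟩ := isPathFrom_concat E p S hγ hab
          have := le_piStar_of_path E p S hp hpath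
          rw [hLeq] at this; linarith
      · have := piStar_nonneg E p S hp b; linarith
    have h1 : dd E p S a = 1 - piStar E p S a := by simp [dd, ha]
    have h2 : dd E p S b = 1 - piStar E p S b := by simp [dd, hb]
    rw [h1, h2]; linarith

/-! ## the worst-case coupling -/

def liveSet (e : V × V) : Set ℝ :=
  {u | ¬ (dd E p S e.1 < u ∧ u ≤ dd E p S e.1 + (1 - p e)) ∧
       ¬ (u + 1 ≤ dd E p S e.1 + (1 - p e))}

open Classical in
noncomputable def cfun (u : ℝ) : Finset (V × V) := E.filter (fun e => u ∈ liveSet E p S e)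

lemma mem_cfun {u : ℝ} {e : V × V} :
    e ∈ cfun E p S u ↔ e ∈ E ∧ u ∈ liveSet E p S e := by
  classical
  simp [cfun]

lemma influenced_dd_lt (hp : ∀ e ∈ E, 0 ≤ p e ∧ p e ≤ 1) {u : ℝ}
    (hu : u ∈ Set.Ioc (0:ℝ) 1) {i : V}
    (h : influenced (cfun E p S u) S i) : dd E p S i < u := by
  obtain ⟨s, hs, hpath⟩ := h
  induction hpath with
  | refl => simp only [dd, if_pos hs]; exact hu.1
  | tail _ hbc ih =>
    rename_i b c _
    rw [mem_cfun] at hbc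
    obtain ⟨hbcE, hlive1, hlive2⟩ := hbc
    have htri := dd_triangle E p S hp hbcE
    have : ¬ u ≤ dd E p S b + (1 - p (b, c)) := fun hle => hlive1 ⟨ih, hle⟩
    push_neg at this
    linarith


/-! ## measure computations -/

open MeasureTheory

lemma liveSet_eq (e : V × V) :
    liveSet E p S e =
      (Set.Ioc (dd E p S e.1) (dd E p S e.1 + (1 - p e)))ᶜ ∩
        (Set.Iic (dd E p S e.1 + (1 - p e) - 1))ᶜ := by
  ext u
  simp only [liveSet, Set.mem_inter_iff, Set.mem_compl_iff, Set.mem_Ioc, Set.mem_Iic,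
    Set.mem_setOf_eq]
  constructor <;> rintro ⟨h1, h2⟩ <;> exact ⟨h1, fun hc => h2 (by linarith)⟩

lemma measurableSet_liveSet (e : V × V) : MeasurableSet (liveSet E p S e) := by
  rw [liveSet_eq]
  exact (measurableSet_Ioc.compl).inter (measurableSet_Iic.compl)

lemma Ioc_inter_liveSet (hp : ∀ e ∈ E, 0 ≤ p e ∧ p e ≤ 1) {e : V × V} (he : e ∈ E) :
    Set.Ioc (0:ℝ) 1 ∩ liveSet E p S e =
      Set.Ioc (max 0 (dd E p S e.1 + (1 - p e) - 1)) (dd E p S e.1) ∪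
        Set.Ioc (min 1 (dd E p S e.1 + (1 - p e))) 1 := by
  have hd0 : 0 ≤ dd E p S e.1 := dd_nonneg E p S hp e.1
  have hd1 : dd E p S e.1 ≤ 1 := dd_le_one E p S hp e.1
  have hw0 : 0 ≤ 1 - p e := by have := (hp e he).2; linarith
  have hw1 : 1 - p e ≤ 1 := by have := (hp e he).1; linarith
  set d := dd E p S e.1 with hdef
  set w := 1 - p e with hwdef
  ext u
  simp only [Set.mem_inter_iff, Set.mem_Ioc, liveSet, Set.mem_setOf_eq, Set.mem_union,
    lt_max_iff, max_lt_iff, lt_min_iff, min_lt_iff]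
  constructor
  · rintro ⟨⟨hu0, hu1⟩, h1, h2⟩
    push_neg at h1 h2
    by_cases hud : u ≤ d
    · left; exact ⟨⟨hu0, by linarith⟩, hud⟩
    · push_neg at hud
      right
      refine ⟨Or.inr (by have := h1 hud; linarith), hu1⟩
  · rintro (⟨⟨hu0, hm⟩, hud⟩ | ⟨hlt, hu1⟩)
    · refine ⟨⟨hu0, by linarith⟩, ?_, by intro hc; linarith⟩
      rintro ⟨hc, -⟩; linarith
    · rcases le_or_gt (d + w) 1 with hdw | hdw
      · have hu : d + w < u := by rcases hlt with h | h <;> linarith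
        refine ⟨⟨by linarith, hu1⟩, ?_, by intro hc; linarith⟩
        rintro ⟨-, hc⟩; linarith
      · have hu : (1:ℝ) < u := by rcases hlt with h | h <;> linarith
        linarith

lemma volume_Ioc_inter_liveSet (hp : ∀ e ∈ E, 0 ≤ p e ∧ p e ≤ 1) {e : V × V} (he : e ∈ E) :
    volume (Set.Ioc (0:ℝ) 1 ∩ liveSet E p S e) = ENNReal.ofReal (p e) := by
  have hd0 : 0 ≤ dd E p S e.1 := dd_nonneg E p S hp e.1
  have hd1 : dd E p S e.1 ≤ 1 := dd_le_one E p S hp e.1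
  have hw0 : 0 ≤ 1 - p e := by have := (hp e he).2; linarith
  have hw1 : 1 - p e ≤ 1 := by have := (hp e he).1; linarith
  rw [Ioc_inter_liveSet E p S hp he]
  set d := dd E p S e.1 with hdef
  set w := 1 - p e with hwdef
  have hdisj : Disjoint (Set.Ioc (max 0 (d + w - 1)) d) (Set.Ioc (min 1 (d + w)) 1) := by
    apply Set.Ioc_disjoint_Ioc.2
    have : min d 1 = d := min_eq_left hd1
    rw [this]
    exact le_max_of_le_right (le_min hd1 (by linarith))
  rw [measure_union hdisj measurableSet_Ioc, Real.volume_Ioc, Real.volume_Ioc,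
    ← ENNReal.ofReal_add (sub_nonneg.2 (max_le hd0 (by linarith)))
      (sub_nonneg.2 (min_le_left _ _))]
  congr 1
  rcases le_or_gt (d + w) 1 with h | h
  · rw [max_eq_left (by linarith), min_eq_right h]; ring
  · rw [max_eq_right (by linarith), min_eq_left (by linarith)]; ring

/-! ## the partition sets -/

noncomputable def Aset (c : Finset (V × V)) : Set ℝ :=
  Set.Ioc (0:ℝ) 1 ∩ {u | cfun E p S u = c}

lemma Aset_subset_Ioc (c : Finset (V × V)) : Aset E p S c ⊆ Set.Ioc (0:ℝ) 1 :=
  Set.inter_subset_left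

lemma cfun_subset (u : ℝ) : cfun E p S u ⊆ E := by
  classical
  exact Finset.filter_subset _ _

lemma cfun_eq_iff {u : ℝ} {c : Finset (V × V)} (hc : c ⊆ E) :
    cfun E p S u = c ↔ ∀ e ∈ E, (u ∈ liveSet E p S e ↔ e ∈ c) := by
  constructor
  · intro h e he
    constructor
    · intro hl; rw [← h, mem_cfun]; exact ⟨he, hl⟩
    · intro hec; rw [← h, mem_cfun] at hec; exact hec.2
  · intro h
    ext e
    rw [mem_cfun]
    constructor
    · rintro ⟨he, hl⟩; exact (h e he).1 hl
    · intro hec; exact ⟨hc hec, (h e (hc hec)).2 hec⟩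

lemma measurableSet_Aset (c : Finset (V × V)) : MeasurableSet (Aset E p S c) := by
  by_cases hc : c ⊆ E
  · have : Aset E p S c = Set.Ioc (0:ℝ) 1 ∩
        ⋂ e ∈ (E : Set (V × V)), (if e ∈ c then liveSet E p S e else (liveSet E p S e)ᶜ) := by
      unfold Aset
      ext u
      simp only [Set.mem_inter_iff, Set.mem_setOf_eq, Set.mem_iInter]
      refine and_congr_right fun _ => ?_
      rw [cfun_eq_iff E p S hc]
      constructor
      · intro h e he
        split
        · next hec => exact (h e he).2 hec
        · next hec => exact fun hl => hec ((h e he).1 hl)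
      · intro h e he
        have := h e he
        constructor
        · intro hl
          by_contra hec
          rw [if_neg hec] at this
          exact this hl
        · intro hec
          rwa [if_pos hec] at this
    rw [this]
    refine measurableSet_Ioc.inter (MeasurableSet.biInter E.finite_toSet.countable ?_)
    intro e _
    split
    · exact measurableSet_liveSet E p S e
    · exact (measurableSet_liveSet E p S e).compl
  · have : Aset E p S c = ∅ := by
      unfold Aset
      ext u
      simp only [Set.mem_inter_iff, Set.mem_setOf_eq, Set.mem_empty_iff_false, iff_false,
        not_and]
      intro _ h
      exact hc (h ▸ cfun_subset E p S u)
    rw [this]; exact MeasurableSet.empty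

lemma Aset_ne (c : Finset (V × V)) (h : ¬ c ⊆ E) : Aset E p S c = ∅ := by
  unfold Aset
  ext u
  simp only [Set.mem_inter_iff, Set.mem_setOf_eq, Set.mem_empty_iff_false, iff_false, not_and]
  intro _ hcu
  exact h (hcu ▸ cfun_subset E p S u)

noncomputable def thetaHat (c : Finset (V × V)) : ℝ := (volume (Aset E p S c)).toReal

lemma volume_Aset_ne_top (c : Finset (V × V)) : volume (Aset E p S c) ≠ ⊤ := by
  have h1 : volume (Aset E p S c) ≤ volume (Set.Ioc (0:ℝ) 1) :=
    measure_mono (Aset_subset_Ioc E p S c)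
  rw [Real.volume_Ioc] at h1
  exact ne_top_of_le_ne_top (by norm_num) h1

lemma sum_thetaHat_filter (P : Finset (V × V) → Prop) [DecidablePred P] :
    ∑ c : Finset (V × V), (if P c then thetaHat E p S c else 0) =
      (volume (Set.Ioc (0:ℝ) 1 ∩ {u | P (cfun E p S u)})).toReal := by
  classical
  have hunion : Set.Ioc (0:ℝ) 1 ∩ {u | P (cfun E p S u)} =
      ⋃ c ∈ Finset.univ.filter P, Aset E p S c := by
    ext u
    simp only [Set.mem_inter_iff, Set.mem_setOf_eq, Set.mem_iUnion, Finset.mem_filter,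
      Finset.mem_univ, true_and]
    constructor
    · rintro ⟨hu, hP⟩
      exact ⟨cfun E p S u, hP, hu, rfl⟩
    · rintro ⟨c, hP, hu, hc⟩
      exact ⟨hu, hc ▸ hP⟩
  rw [← Finset.sum_filter]
  rw [hunion, measure_biUnion_finset ?hd (fun c _ => measurableSet_Aset E p S c)]
  · rw [ENNReal.toReal_sum (fun c _ => volume_Aset_ne_top E p S c)]; rfl
  case hd =>
    intro c _ c' _ hne
    apply Set.disjoint_left.2
    rintro u ⟨-, hu⟩ ⟨-, hu'⟩
    exact hne (hu ▸ hu' ▸ rfl)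


/-! ## prob lemmas -/

lemma prob_eq (θ : Finset (V × V) → ℝ) (A : Finset (V × V) → Prop) [DecidablePred A] :
    prob θ A = ∑ c : Finset (V × V), if A c then θ c else 0 := by
  unfold prob
  exact Finset.sum_congr rfl fun c _ => by by_cases h : A c <;> simp [h]

lemma prob_nonneg {θ : Finset (V × V) → ℝ} (h0 : ∀ c, 0 ≤ θ c) (A : Finset (V × V) → Prop) :
    0 ≤ prob θ A := by
  classical
  rw [prob_eq]
  apply Finset.sum_nonneg
  intro c _
  split
  · exact h0 c
  · exact le_rfl

lemma prob_le_one {θ : Finset (V × V) → ℝ} (hθ : memTheta E p θ) (A : Finset (V × V) → Prop) :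
    prob θ A ≤ 1 := by
  classical
  rw [prob_eq, ← hθ.2.2.1]
  apply Finset.sum_le_sum
  intro c _
  split
  · exact le_rfl
  · exact hθ.1 c

lemma prob_mono {θ : Finset (V × V) → ℝ} (h0 : ∀ c, 0 ≤ θ c)
    {A B : Finset (V × V) → Prop} (h : ∀ c, A c → B c) : prob θ A ≤ prob θ B := by
  classical
  rw [prob_eq θ A, prob_eq θ B]
  apply Finset.sum_le_sum
  intro c _
  by_cases hA : A c
  · rw [if_pos hA, if_pos (h c hA)]
  · rw [if_neg hA]
    split
    · exact h0 c
    · exact le_rfl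

lemma prob_of_forall {θ : Finset (V × V) → ℝ} (hθ : memTheta E p θ)
    {A : Finset (V × V) → Prop} (h : ∀ c, A c) : prob θ A = 1 := by
  classical
  rw [prob_eq, ← hθ.2.2.1]
  exact Finset.sum_congr rfl fun c _ => if_pos (h c)

lemma prob_not {θ : Finset (V × V) → ℝ} (hθ : memTheta E p θ) (A : Finset (V × V) → Prop) :
    prob θ (fun c => ¬ A c) = 1 - prob θ A := by
  classical
  rw [prob_eq θ A, prob_eq θ (fun c => ¬ A c), ← hθ.2.2.1, eq_sub_iff_add_eq,
    ← Finset.sum_add_distrib]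
  exact Finset.sum_congr rfl fun c _ => by by_cases h : A c <;> simp [h]

lemma prob_edge {θ : Finset (V × V) → ℝ} (hθ : memTheta E p θ) {e : V × V} (he : e ∈ E) :
    prob θ (fun c => e ∈ c) = p e := by
  classical
  rw [prob_eq]
  exact hθ.2.2.2 e he

lemma prob_all_edges {θ : Finset (V × V) → ℝ} (hθ : memTheta E p θ) {l : List (V × V)}
    (hl : ∀ e ∈ l, e ∈ E) :
    1 - (l.map (fun e => 1 - p e)).sum ≤ prob θ (fun c => ∀ e ∈ l, e ∈ c) := by
  classical
  induction l with
  | nil =>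
    rw [prob_of_forall E p hθ (by simp)]
    simp
  | cons e l ih =>
    have hE : e ∈ E := hl e (List.mem_cons_self)
    have ihl := ih fun x hx => hl x (List.mem_cons_of_mem _ hx)
    have hsplit : prob θ (fun c => ∀ x ∈ l, x ∈ c) ≤
        prob θ (fun c => ∀ x ∈ e :: l, x ∈ c) + prob θ (fun c => ¬ (e ∈ c)) := by
      rw [prob_eq θ (fun c => ∀ x ∈ l, x ∈ c), prob_eq θ (fun c => ∀ x ∈ e :: l, x ∈ c),
        prob_eq θ (fun c => ¬ (e ∈ c)), ← Finset.sum_add_distrib]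
      apply Finset.sum_le_sum
      intro c _
      by_cases hec : e ∈ c
      · by_cases hlc : ∀ x ∈ l, x ∈ c
        · have : ∀ x ∈ e :: l, x ∈ c := by
            intro x hx
            rcases List.mem_cons.1 hx with rfl | hx
            · exact hec
            · exact hlc x hx
          simp [hlc, hec, this, hθ.1 c]
        · simp [hlc, hec, hθ.1 c]
      · have hnall : ¬ ∀ x ∈ e :: l, x ∈ c := fun h => hec (h e (List.mem_cons_self))
        rw [if_neg hnall, if_pos (show e ∉ c from hec), zero_add]
        split
        · exact le_rfl
        · exact hθ.1 c
    rw [prob_not E p hθ, prob_edge E p hθ hE] at hsplit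
    simp only [List.map_cons, List.sum_cons]
    linarith

lemma influenced_of_path_edges {c : Finset (V × V)} {γ : List V} {i : V}
    (hγ : IsPathFrom E S i γ) (h : ∀ e ∈ pathEdges γ, e ∈ c) : influenced c S i := by
  obtain ⟨-, ⟨s, hs, hh⟩, hl, -⟩ := hγ
  exact ⟨s, hs, reflTransGen_of_chain' (chain'_of_pathEdges h) hh hl⟩

lemma piStar_le_prob (hp : ∀ e ∈ E, 0 ≤ p e ∧ p e ≤ 1) {θ : Finset (V × V) → ℝ}
    (hθ : memTheta E p θ) (i : V) :
    piStar E p S i ≤ prob θ (fun c => influenced c S i) := by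
  apply Real.sSup_le _ (prob_nonneg hθ.1 _)
  intro x hx
  rcases hx with rfl | ⟨γ, hγ, rfl⟩
  · exact prob_nonneg hθ.1 _
  · have h1 := prob_all_edges E p hθ
      (fun e he => pathEdges_mem_of_chain' E hγ.2.2.2 he)
    have h2 : prob θ (fun c => ∀ e ∈ pathEdges γ, e ∈ c) ≤
        prob θ (fun c => influenced c S i) :=
      prob_mono hθ.1 fun c hc => influenced_of_path_edges E S hγ hc
    simp only [L]
    linarith

lemma prob_influenced_seed {θ : Finset (V × V) → ℝ} (hθ : memTheta E p θ) {i : V}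
    (hi : i ∈ S) : prob θ (fun c => influenced c S i) = 1 :=
  prob_of_forall E p hθ fun c => ⟨i, hi, Relation.ReflTransGen.refl⟩

lemma expInf_eq_sum_prob (θ : Finset (V × V) → ℝ) :
    expInf θ S = ∑ i : V, prob θ (fun c => influenced c S i) := by
  classical
  have hR : ∀ c, (R c S : ℝ) = ∑ i : V, if influenced c S i then (1:ℝ) else 0 := by
    intro c
    have h1 : R c S = (Finset.univ.filter (fun i => influenced c S i)).card := by
      rw [R, Set.ncard_eq_toFinset_card']
      congr 1
      ext i
      simp
    rw [h1, Finset.card_filter]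
    push_cast
    rfl
  unfold expInf
  calc ∑ c : Finset (V × V), θ c * (R c S : ℝ)
      = ∑ c : Finset (V × V), ∑ i : V, (if influenced c S i then θ c else 0) := by
        refine Finset.sum_congr rfl fun c _ => ?_
        rw [hR c, Finset.mul_sum]
        exact Finset.sum_congr rfl fun i _ => by by_cases h : influenced c S i <;> simp [h]
    _ = ∑ i : V, ∑ c : Finset (V × V), (if influenced c S i then θ c else 0) :=
        Finset.sum_comm
    _ = ∑ i : V, prob θ (fun c => influenced c S i) :=
        Finset.sum_congr rfl fun i _ => (prob_eq θ _).symm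

/-! ## thetaHat is in Theta -/

lemma thetaHat_memTheta (hp : ∀ e ∈ E, 0 ≤ p e ∧ p e ≤ 1) :
    memTheta E p (thetaHat E p S) := by
  classical
  refine ⟨fun c => ENNReal.toReal_nonneg, fun c hc => ?_, ?_, ?_⟩
  · by_contra h
    rw [thetaHat, Aset_ne E p S c h] at hc
    simp at hc
  · have h := sum_thetaHat_filter E p S (fun _ => True)
    simp only [if_true] at h
    rw [h]
    have : Set.Ioc (0:ℝ) 1 ∩ {u | True} = Set.Ioc (0:ℝ) 1 := by simp
    rw [this, Real.volume_Ioc]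
    norm_num
  · intro e he
    have h := sum_thetaHat_filter E p S (fun c => e ∈ c)
    rw [h]
    have hset : Set.Ioc (0:ℝ) 1 ∩ {u | e ∈ cfun E p S u} =
        Set.Ioc (0:ℝ) 1 ∩ liveSet E p S e := by
      ext u
      simp only [Set.mem_inter_iff, Set.mem_setOf_eq, mem_cfun]
      tauto
    rw [hset, volume_Ioc_inter_liveSet E p S hp he,
      ENNReal.toReal_ofReal (hp e he).1]

lemma thetaHat_prob_le (hp : ∀ e ∈ E, 0 ≤ p e ∧ p e ≤ 1) {i : V} (hi : i ∉ S) :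
    prob (thetaHat E p S) (fun c => influenced c S i) ≤ piStar E p S i := by
  classical
  rw [prob_eq, sum_thetaHat_filter E p S (fun c => influenced c S i)]
  have hsub : Set.Ioc (0:ℝ) 1 ∩ {u | influenced (cfun E p S u) S i} ⊆
      Set.Ioc (dd E p S i) 1 := by
    rintro u ⟨hu, hinf⟩
    exact ⟨influenced_dd_lt E p S hp hu hinf, hu.2⟩
  have h1 : volume (Set.Ioc (0:ℝ) 1 ∩ {u | influenced (cfun E p S u) S i}) ≤
      volume (Set.Ioc (dd E p S i) 1) := measure_mono hsub
  have h2 : volume (Set.Ioc (dd E p S i) 1) = ENNReal.ofReal (piStar E p S i) := by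
    rw [Real.volume_Ioc]
    congr 1
    simp [dd, hi]
  calc (volume (Set.Ioc (0:ℝ) 1 ∩ {u | influenced (cfun E p S u) S i})).toReal
      ≤ (volume (Set.Ioc (dd E p S i) 1)).toReal := by
        apply ENNReal.toReal_mono _ h1
        rw [h2]
        exact ENNReal.ofReal_ne_top
    _ = piStar E p S i := by
        rw [h2, ENNReal.toReal_ofReal (piStar_nonneg E p S hp i)]

end Aux

/-- if `θ*` attains the minimum of `E_θ[R(c̃, S)]` over `Θ`, then for
every `i ∈ V \ S`, the probability under `θ*` that `i` is influenced equals `π*_i`. -/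
theorem minimizer_influence_prob_eq_piStar (E : Finset (V × V)) (p : V × V → ℝ)
    (hp : ∀ e ∈ E, 0 ≤ p e ∧ p e ≤ 1) (S : Finset V)
    (θs : Finset (V × V) → ℝ) (hθs : memTheta E p θs)
    (hmin : ∀ θ : Finset (V × V) → ℝ, memTheta E p θ → expInf θs S ≤ expInf θ S) :
    ∀ i ∈ Finset.univ \ S, prob θs (fun c => influenced c S i) = piStar E p S i := by
  classical
  intro i hi
  have hiS : i ∉ S := (Finset.mem_sdiff.1 hi).2
  have hhat := thetaHat_memTheta E p S hp
  set b : V → ℝ := fun j => if j ∈ S then (1:ℝ) else piStar E p S j with hb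
  have hterm : ∀ j ∈ Finset.univ, b j ≤ prob θs (fun c => influenced c S j) := by
    intro j _
    by_cases hj : j ∈ S
    · rw [hb]; simp only [if_pos hj]
      exact le_of_eq (prob_influenced_seed E p S hθs hj).symm
    · rw [hb]; simp only [if_neg hj]
      exact piStar_le_prob E p S hp hθs j
  have hup : ∀ j ∈ Finset.univ,
      prob (thetaHat E p S) (fun c => influenced c S j) ≤ b j := by
    intro j _
    by_cases hj : j ∈ S
    · rw [hb]; simp only [if_pos hj]; exact prob_le_one E p hhat _
    · rw [hb]; simp only [if_neg hj]; exact thetaHat_prob_le E p S hp hj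
  have hsum : ∑ j : V, prob θs (fun c => influenced c S j) ≤ ∑ j : V, b j := by
    calc ∑ j : V, prob θs (fun c => influenced c S j) = expInf θs S :=
          (expInf_eq_sum_prob S θs).symm
      _ ≤ expInf (thetaHat E p S) S := hmin _ hhat
      _ = ∑ j : V, prob (thetaHat E p S) (fun c => influenced c S j) :=
          expInf_eq_sum_prob S _
      _ ≤ ∑ j : V, b j := Finset.sum_le_sum hup
  have hsum2 := Finset.sum_le_sum hterm
  have heqsum : ∑ j : V, b j = ∑ j : V, prob θs (fun c => influenced c S j) :=
    le_antisymm hsum2 hsum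
  have heq := (Finset.sum_eq_sum_iff_of_le hterm).1 heqsum
  have hfin := heq i (Finset.mem_univ i)
  rw [hb] at hfin
  simp only [if_neg hiS] at hfin
  exact hfin.symm


end CorrIM
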